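/- arXiv:1604.05251 — 3 statements merged into one kernel-verified Lean document; each statement's English description precedes it below -/
import Mathlib

section
/- Let X be a set, k a kernel on X with RKHS H_k, F a locally convex topological vector space over ℂ of functions on X containing H_k, and assume the inclusion ι : H_k → F is continuous. Define the kernel mean embedding Φ_k : F′ → H_k by letting Φ_k(D) be the unique element of H_k with ⟨f, Φ_k(D)⟩ = conj(D(f)) for all f ∈ H_k (the Riesz representer of the conjugate of D ∘ ι). Then: (a) Φ_k is continuous when F′ carries the strong dual topology (uniform convergence on bounded subsets of F) and H_k its norm topology; (b) Φ_k is continuous when F′ carries the weak-* topology (pointwise convergence on F) and H_k its weak topology (the topology in which a net converges iff its inner products against every fixed element of H_k converge). -/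
open MeasureTheory ComplexConjugate Filter Topology

noncomputable section

/-- A (positive definite) kernel: all quadratic forms are nonnegative real numbers. -/
def IsPosDefKernel {X : Type*} (k : X → X → ℂ) : Prop :=
  ∀ (n : ℕ) (x : Fin n → X) (c : Fin n → ℂ),
    0 ≤ (∑ i, ∑ j, c i * conj (c j) * k (x i) (x j)).re ∧
    (∑ i, ∑ j, c i * conj (c j) * k (x i) (x j)).im = 0

/-- if `H_k` embeds continuously into a locally convex TVS `F` of functions
on `X`, then the kernel mean embedding `Φ_k : F′ → H_k` (the Riesz representer of
`D ∘ ι`, i.e. of the conjugate of `D ∘ ι` up to the conjugation bookkeeping) is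
(a) continuous from the strong dual topology to the norm topology, and
(b) continuous from the weak-* topology to the weak topology of `H_k`. -/
theorem statement_15
    {X : Type*} (k : X → X → ℂ) (hk : IsPosDefKernel k)
    (H : Type*) [NormedAddCommGroup H] [InnerProductSpace ℂ H] [CompleteSpace H]
    (ev : H →ₗ[ℂ] (X → ℂ)) (hev : Function.Injective ev)
    (K : X → H) (hK : ∀ x, ev (K x) = fun s => k s x)
    (hrep : ∀ (f : H) (x : X), (inner ℂ (K x) f : ℂ) = ev f x)
    -- `F`: a locally convex TVS of functions on `X`
    (F : Type*) [AddCommGroup F] [Module ℂ F] [TopologicalSpace F]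
    [IsTopologicalAddGroup F] [ContinuousSMul ℂ F]
    [Module ℝ F] [IsScalarTower ℝ ℂ F] [LocallyConvexSpace ℝ F]
    (j : F →ₗ[ℂ] (X → ℂ)) (hj : Function.Injective j)
    -- the (continuous) inclusion of `H_k` into `F`
    (ι : H →L[ℂ] F) (hι : ∀ f : H, j (ι f) = ev f)
    -- the kernel mean embedding: the Riesz representer of `D ∘ ι`
    (Φ : (F →L[ℂ] ℂ) → H)
    (hΦ : ∀ (D : F →L[ℂ] ℂ) (f : H), (inner ℂ (Φ D) f : ℂ) = D (ι f)) :
    -- (a) strong-to-strong continuity (the topology on `F →L[ℂ] ℂ` is the strong dual one)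
    Continuous Φ ∧
    -- (b) weak-*-to-weak continuity
    @Continuous (F →L[ℂ] ℂ) H
      (TopologicalSpace.induced (fun D : F →L[ℂ] ℂ => fun f : F => D f) inferInstance)
      (TopologicalSpace.induced (fun g : H => fun h : H => (inner ℂ h g : ℂ)) inferInstance)
      Φ := by
  have hΦeq : Φ = fun D => (InnerProductSpace.toDual ℂ H).symm (D.comp ι) := by
    funext D
    apply (InnerProductSpace.toDual ℂ H).injective
    ext f
    simp only [InnerProductSpace.toDual_apply_apply, hΦ,
      LinearIsometryEquiv.apply_symm_apply, ContinuousLinearMap.comp_apply]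
  constructor
  · rw [hΦeq]
    exact (InnerProductSpace.toDual ℂ H).symm.continuous.comp
      (ContinuousLinearMap.precomp ℂ ι).continuous
  · rw [hΦeq]
    letI tw : TopologicalSpace (F →L[ℂ] ℂ) :=
      TopologicalSpace.induced (fun D : F →L[ℂ] ℂ => fun f : F => D f) inferInstance
    apply continuous_induced_rng.2
    apply continuous_pi
    intro g
    have h1 : (fun D : F →L[ℂ] ℂ =>
        (inner ℂ g ((InnerProductSpace.toDual ℂ H).symm (D.comp ι)) : ℂ))
        = fun D : F →L[ℂ] ℂ => conj (D (ι g)) := by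
      funext D
      rw [← inner_conj_symm]
      congr 1
      have := (InnerProductSpace.toDual_apply_apply (𝕜 := ℂ)
        (x := (InnerProductSpace.toDual ℂ H).symm (D.comp ι)) (y := g))
      rw [LinearIsometryEquiv.apply_symm_apply] at this
      simpa using this
    show Continuous fun D : F →L[ℂ] ℂ =>
      (inner ℂ g ((InnerProductSpace.toDual ℂ H).symm (D.comp ι)) : ℂ)
    rw [h1]
    have h2 : Continuous fun D : F →L[ℂ] ℂ => D (ι g) :=
      (continuous_apply (ι g)).comp (continuous_induced_dom
        (t := (inferInstance : TopologicalSpace (F → ℂ))))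
    exact Complex.continuous_conj.comp h2

end
end

section
/- Let F be a barrelled locally convex topological vector space over ℂ, k a kernel on a set X with RKHS H_k ⊆ F, and assume the inclusion ι : H_k → F is continuous with dense range (k is universal over F). Let B ⊆ F′ be a bounded subset of the dual, i.e., sup_{D∈B} |D(f)| < ∞ for every f ∈ F. Then on B the weak-* topology (pointwise convergence on F) coincides with the topology of pointwise convergence on H_k: for any net (D_α) in B and any D ∈ B, D_α(f) → D(f) for all f ∈ F if and only if D_α(g) → D(g) for all g ∈ H_k. Consequently, letting Φ_k(D) ∈ H_k denote the Riesz representer of the conjugate of D ∘ ι, the pseudometric d_k(D,T) := ‖Φ_k(D) − Φ_k(T)‖ induces on B a topology finer than the weak-* topology restricted to B and coarser than the strong dual topology restricted to B. -/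
open MeasureTheory ComplexConjugate Filter Topology

noncomputable section

/-- if `F` is barrelled, `H_k ↪ F` continuously and densely (`k` universal
over `F`), and `B ⊆ F′` is pointwise bounded, then on `B` the weak-* topology coincides with
the topology of pointwise convergence on `H_k`; consequently the pseudometric
`d_k(D,T) = ‖Φ_k D − Φ_k T‖` induces on `B` a topology finer than the weak-* topology and
coarser than the strong dual topology. -/
theorem statement_17
    {X : Type*} (k : X → X → ℂ) (hk : IsPosDefKernel k)
    (H : Type*) [NormedAddCommGroup H] [InnerProductSpace ℂ H] [CompleteSpace H]
    (ev : H →ₗ[ℂ] (X → ℂ)) (hev : Function.Injective ev)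
    (K : X → H) (hK : ∀ x, ev (K x) = fun s => k s x)
    (hrep : ∀ (f : H) (x : X), (inner ℂ (K x) f : ℂ) = ev f x)
    -- `F`: a barrelled locally convex TVS containing `H_k`
    (F : Type*) [AddCommGroup F] [Module ℂ F] [TopologicalSpace F]
    [IsTopologicalAddGroup F] [ContinuousSMul ℂ F]
    [Module ℝ F] [IsScalarTower ℝ ℂ F] [LocallyConvexSpace ℝ F]
    [BarrelledSpace ℂ F]
    (j : F →ₗ[ℂ] (X → ℂ)) (hj : Function.Injective j)
    (ι : H →L[ℂ] F) (hι : ∀ f : H, j (ι f) = ev f)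
    -- `k` is universal over `F`
    (hdense : DenseRange ι)
    -- `B`: a (pointwise) bounded subset of the dual `F′`
    (B : Set (F →L[ℂ] ℂ))
    (hB : ∀ f : F, ∃ C : ℝ, ∀ D ∈ B, ‖D f‖ ≤ C)
    -- the kernel mean embedding (Riesz representer of `D ∘ ι`)
    (Φ : (F →L[ℂ] ℂ) → H)
    (hΦ : ∀ (D : F →L[ℂ] ℂ) (f : H), (inner ℂ (Φ D) f : ℂ) = D (ι f)) :
    -- on `B`, the weak-* topology coincides with pointwise convergence on `H_k`
    (TopologicalSpace.induced (fun D : B => fun f : F => (D : F →L[ℂ] ℂ) f)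
        (inferInstance : TopologicalSpace (F → ℂ))
      = TopologicalSpace.induced (fun D : B => fun g : H => (D : F →L[ℂ] ℂ) (ι g))
        (inferInstance : TopologicalSpace (H → ℂ))) ∧
    -- the `d_k`-topology on `B` is finer than the weak-* topology …
    (TopologicalSpace.induced (fun D : B => Φ D) (inferInstance : TopologicalSpace H)
      ≤ TopologicalSpace.induced (fun D : B => fun f : F => (D : F →L[ℂ] ℂ) f)
        (inferInstance : TopologicalSpace (F → ℂ))) ∧
    -- … and coarser than the strong dual topology
    (TopologicalSpace.induced (fun D : B => (D : F →L[ℂ] ℂ))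
        (inferInstance : TopologicalSpace (F →L[ℂ] ℂ))
      ≤ TopologicalSpace.induced (fun D : B => Φ D) (inferInstance : TopologicalSpace H)) := by
  classical
  set qF : B → F → ℂ := fun D => fun f => (D : F →L[ℂ] ℂ) f with hqFdef
  set qH : B → H → ℂ := fun D => fun g => (D : F →L[ℂ] ℂ) (ι g) with hqHdef
  -- `Φ` agrees with the Riesz representation of `D ∘ ι`
  have hΦeq : Φ = fun D => (InnerProductSpace.toDual ℂ H).symm (D.comp ι) := by
    funext D
    apply ext_inner_right ℂ
    intro v
    rw [hΦ, InnerProductSpace.toDual_symm_apply]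
    rfl
  have hΦcont : Continuous Φ := by
    rw [hΦeq]
    exact (InnerProductSpace.toDual ℂ H).symm.continuous.comp
      (ContinuousLinearMap.precomp ℂ ι).continuous
  -- Banach–Steinhaus: `B` is equicontinuous
  have hequi : Equicontinuous (fun D : B => ((D : F →L[ℂ] ℂ) : F → ℂ)) := by
    letI : UniformSpace F := IsTopologicalAddGroup.rightUniformSpace F
    haveI : IsUniformAddGroup F := isUniformAddGroup_of_addCommGroup
    refine ((norm_withSeminorms ℂ ℂ).banach_steinhaus
      (𝓕 := fun D : B => (D : F →L[ℂ] ℂ)) ?_).equicontinuous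
    intro _ x
    obtain ⟨C, hC⟩ := hB x
    refine ⟨C, ?_⟩
    rintro r ⟨i, rfl⟩
    simpa using hC i i.2
  -- easy direction of part 1
  have hcompF : qH = (fun φ : F → ℂ => fun g : H => φ (ι g)) ∘ qF := rfl
  have h1 : TopologicalSpace.induced qF (inferInstance : TopologicalSpace (F → ℂ))
      ≤ TopologicalSpace.induced qH (inferInstance : TopologicalSpace (H → ℂ)) := by
    rw [hcompF, ← induced_compose]
    exact induced_mono (continuous_iff_le_induced.mp
      (continuous_pi fun g => continuous_apply (ι g)))
  -- hard direction of part 1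
  have h2 : TopologicalSpace.induced qH (inferInstance : TopologicalSpace (H → ℂ))
      ≤ TopologicalSpace.induced qF (inferInstance : TopologicalSpace (F → ℂ)) := by
    letI tB : TopologicalSpace B := TopologicalSpace.induced qH inferInstance
    change tB ≤ _
    rw [← continuous_iff_le_induced]
    rw [continuous_pi_iff]
    intro f
    rw [continuous_iff_continuousAt]
    intro D₀
    refine Metric.tendsto_nhds.mpr ?_
    intro ε hε
    have hε3 : 0 < ε / 3 := by linarith
    have heq := hequi f {p : ℂ × ℂ | dist p.1 p.2 < ε / 3} (Metric.dist_mem_uniformity hε3)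
    obtain ⟨V, hV, hVp⟩ := heq.exists_mem
    obtain ⟨y, hyV, g, rfl⟩ : ∃ y ∈ V, ∃ g : H, ι g = y := by
      obtain ⟨y, hy1, hy2⟩ := mem_closure_iff_nhds.mp (hdense f) V hV
      exact ⟨y, hy1, hy2.choose, hy2.choose_spec⟩
    have hqHc : Continuous qH := continuous_induced_dom
    have hc : Continuous fun D : B => (D : F →L[ℂ] ℂ) (ι g) :=
      (continuous_apply g).comp hqHc
    have hevg := Metric.tendsto_nhds.mp (hc.tendsto D₀) (ε / 3) hε3
    filter_upwards [hevg] with D hD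
    have hD1 := hVp (ι g) hyV D
    have hD2 := hVp (ι g) hyV D₀
    simp only [Set.mem_setOf_eq] at hD1 hD2
    have htri : dist ((D : F →L[ℂ] ℂ) f) ((D₀ : F →L[ℂ] ℂ) f)
        ≤ dist ((D : F →L[ℂ] ℂ) f) ((D : F →L[ℂ] ℂ) (ι g))
          + dist ((D : F →L[ℂ] ℂ) (ι g)) ((D₀ : F →L[ℂ] ℂ) (ι g))
          + dist ((D₀ : F →L[ℂ] ℂ) (ι g)) ((D₀ : F →L[ℂ] ℂ) f) := dist_triangle4 _ _ _ _
    have : dist ((D₀ : F →L[ℂ] ℂ) (ι g)) ((D₀ : F →L[ℂ] ℂ) f) < ε / 3 := by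
      rw [dist_comm]; exact hD2
    calc dist (qF D f) (qF D₀ f)
        = dist ((D : F →L[ℂ] ℂ) f) ((D₀ : F →L[ℂ] ℂ) f) := rfl
      _ ≤ _ := htri
      _ < ε / 3 + ε / 3 + ε / 3 := by
          refine add_lt_add (add_lt_add hD1 hD) this
      _ = ε := by ring
  have hpart1 : TopologicalSpace.induced qF (inferInstance : TopologicalSpace (F → ℂ))
      = TopologicalSpace.induced qH (inferInstance : TopologicalSpace (H → ℂ)) :=
    le_antisymm h1 h2
  refine ⟨hpart1, ?_, ?_⟩
  · -- `d_k` finer than weak-*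
    rw [hpart1]
    have hfac : qH = (fun h : H => fun g : H => (inner ℂ h g : ℂ)) ∘ (fun D : B => Φ D) := by
      funext D g
      exact (hΦ D g).symm
    rw [hfac, ← induced_compose]
    exact induced_mono (continuous_iff_le_induced.mp
      (continuous_pi fun g => continuous_id.inner continuous_const))
  · -- strong finer than `d_k`
    have hfac : (fun D : B => Φ D) = Φ ∘ (fun D : B => (D : F →L[ℂ] ℂ)) := rfl
    rw [hfac, ← induced_compose]
    exact induced_mono (continuous_iff_le_induced.mp hΦcont)

end
end

section
/- Let d ≥ 1 and let ψ : ℝ^d → ℂ be a continuous function vanishing at infinity (for every ε > 0 there is a compact K ⊆ ℝ^d with |ψ| ≤ ε outside K) such that k(x,y) := ψ(x − y) is a kernel on ℝ^d with RKHS H_k. For n ≥ 1 let P_n be the uniform probability measure on the cube [0,n]^d, i.e., Lebesgue measure restricted to [0,n]^d divided by n^d. Then ∬ k(x,y) dP_n(y) dP_n(x) → 0 as n → ∞, equivalently ‖Φ_k(P_n)‖ → 0, while P_n does not converge narrowly to the zero measure (indeed P_n(ℝ^d) = 1 for all n). Consequently, k does not metrise the narrow topology on any set M of finite positive Borel measures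 on ℝ^d containing all Borel probability measures together with the zero measure: the topology induced on M by the pseudometric d_k(μ,ν) := ‖Φ_k(μ) − Φ_k(ν)‖ differs from the narrow topology on M. -/
open MeasureTheory ComplexConjugate Filter Topology

noncomputable section

/-- The narrow (weak convergence) topology on a set `M` of measures: the coarsest topology
making `μ ↦ ∫ f dμ` continuous for every bounded continuous `f`. -/
noncomputable def narrowTopology (X : Type*) [TopologicalSpace X] [MeasurableSpace X]
    (M : Set (Measure X)) : TopologicalSpace M :=
  TopologicalSpace.induced
    (fun μ : M => fun f : BoundedContinuousFunction X ℝ => ∫ x, f x ∂(μ : Measure X))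
    inferInstance

/-- for a stationary kernel `k(x,y) = ψ(x−y)` on `ℝ^d` with `ψ`
continuous and vanishing at infinity, the uniform probability measures `P_n` on the cubes
`[0,n]^d` satisfy `∬ k dP_n dP_n → 0` (equivalently `‖Φ_k(P_n)‖ → 0`) while `P_n` does not
converge narrowly to the zero measure; hence `k` does not metrise the narrow topology on any
set of finite positive Borel measures containing all probability measures and `0`. -/
theorem statement_19
    {d : ℕ} (hd : 1 ≤ d)
    (ψ : (Fin d → ℝ) → ℂ) (hψc : Continuous ψ)
    (hψ0 : Tendsto ψ (cocompact (Fin d → ℝ)) (nhds 0))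
    (k : (Fin d → ℝ) → (Fin d → ℝ) → ℂ) (hkdef : ∀ x y, k x y = ψ (x - y))
    (hk : IsPosDefKernel k)
    (H : Type*) [NormedAddCommGroup H] [InnerProductSpace ℂ H] [CompleteSpace H]
    (ev : H →ₗ[ℂ] ((Fin d → ℝ) → ℂ)) (hev : Function.Injective ev)
    (K : (Fin d → ℝ) → H) (hK : ∀ x, ev (K x) = fun s => k s x)
    (hrep : ∀ (f : H) (x : Fin d → ℝ), (inner ℂ (K x) f : ℂ) = ev f x)
    -- `P n` is the uniform probability measure on the cube `[0,n]^d`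
    (P : ℕ → Measure (Fin d → ℝ))
    (hP : ∀ n : ℕ, P n = ((n : ENNReal) ^ d)⁻¹ •
      (volume : Measure (Fin d → ℝ)).restrict (Set.Icc 0 fun _ => (n : ℝ))) :
    -- `∬ k(x,y) dP_n(y) dP_n(x) → 0` …
    Tendsto (fun n => ∫ x, ∫ y, k x y ∂(P n) ∂(P n)) atTop (nhds 0) ∧
    -- … equivalently `‖Φ_k(P_n)‖ → 0` …
    Tendsto (fun n => ‖∫ x, K x ∂(P n)‖) atTop (nhds 0) ∧
    -- … while `P_n` has full mass `1` and does not converge narrowly to the zero measure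
    (∀ n : ℕ, 1 ≤ n → P n Set.univ = 1) ∧
    ¬ (∀ f : BoundedContinuousFunction (Fin d → ℝ) ℝ,
        Tendsto (fun n => ∫ x, f x ∂(P n)) atTop
          (nhds (∫ x, f x ∂(0 : Measure (Fin d → ℝ))))) ∧
    -- hence `k` metrises the narrow topology on no set `M ⊇ P ∪ {0}` of finite measures
    (∀ M : Set (Measure (Fin d → ℝ)),
      (∀ μ ∈ M, IsFiniteMeasure μ) →
      {μ : Measure (Fin d → ℝ) | IsProbabilityMeasure μ} ⊆ M →
      (0 : Measure (Fin d → ℝ)) ∈ M →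
      TopologicalSpace.induced (fun μ : M => ∫ x, K x ∂(μ : Measure (Fin d → ℝ)))
          (inferInstance : TopologicalSpace H)
        ≠ narrowTopology (Fin d → ℝ) M) := by
  classical
  -- ## basic measure facts
  have hvol : ∀ n : ℕ, volume (Set.Icc (0 : Fin d → ℝ) (fun _ => (n:ℝ))) = (n : ENNReal) ^ d := by
    intro n
    rw [Real.volume_Icc_pi]
    simp [ENNReal.ofReal_natCast]
  have huniv : ∀ n : ℕ, 1 ≤ n → P n Set.univ = 1 := by
    intro n hn
    rw [hP n]
    simp only [Measure.smul_apply, Measure.restrict_apply MeasurableSet.univ, Set.univ_inter,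
      smul_eq_mul, hvol n]
    rw [ENNReal.inv_mul_cancel]
    · positivity
    · exact ENNReal.pow_ne_top (ENNReal.natCast_ne_top n)
  have hP0 : P 0 = 0 := by
    rw [hP 0]
    have : (volume : Measure (Fin d → ℝ)).restrict (Set.Icc 0 fun _ => ((0:ℕ) : ℝ)) = 0 := by
      rw [Measure.restrict_eq_zero, hvol 0]
      simp
      omega
    rw [this, smul_zero]
  have hfin : ∀ n, IsFiniteMeasure (P n) := by
    intro n
    rcases Nat.eq_zero_or_pos n with h | h
    · subst h; rw [hP0]; infer_instance
    · exact ⟨by rw [huniv n h]; exact ENNReal.one_lt_top⟩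
  have hresle : ∀ n : ℕ, ∀ s : Set (Fin d → ℝ), P n s ≤ ((n : ENNReal) ^ d)⁻¹ * volume s := by
    intro n s
    rw [hP n]
    simp only [Measure.smul_apply, smul_eq_mul]
    exact mul_le_mul_right (Measure.restrict_le_self s) _
  -- ## boundedness of ψ
  obtain ⟨C, hC0, hC⟩ : ∃ C : ℝ, 0 ≤ C ∧ ∀ x, ‖ψ x‖ ≤ C := by
    have h1 : ψ ⁻¹' Metric.ball 0 1 ∈ cocompact (Fin d → ℝ) := hψ0 (Metric.ball_mem_nhds 0 one_pos)
    rw [mem_cocompact] at h1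
    obtain ⟨S, hScomp, hSsub⟩ := h1
    rcases S.eq_empty_or_nonempty with h | h
    · refine ⟨1, zero_le_one, fun x => ?_⟩
      have : x ∈ Sᶜ := by simp [h]
      exact le_of_lt (by simpa [mem_ball_zero_iff] using hSsub this)
    · obtain ⟨z, hzS, hz⟩ := hScomp.exists_isMaxOn h (hψc.norm.continuousOn)
      refine ⟨max ‖ψ z‖ 1, le_trans zero_le_one (le_max_right _ _), fun x => ?_⟩
      by_cases hx : x ∈ S
      · exact le_trans (hz hx) (le_max_left _ _)
      · exact le_trans (le_of_lt (by simpa [mem_ball_zero_iff] using hSsub hx))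
          (le_max_right _ _)
  -- ## the central estimate : `A n → 0`
  set A := fun n => ∫ z : (Fin d → ℝ) × (Fin d → ℝ), ‖ψ (z.1 - z.2)‖ ∂((P n).prod (P n)) with hAdef
  have hAnn : ∀ n, 0 ≤ A n := fun n => integral_nonneg fun z => norm_nonneg _
  have hA : Tendsto A atTop (nhds 0) := by
    rw [NormedAddCommGroup.tendsto_nhds_zero]
    intro ε hε
    have h3 : (0:ℝ) < ε/3 := by positivity
    have hmem : ψ ⁻¹' Metric.ball 0 (ε/3) ∈ cocompact (Fin d → ℝ) :=
      hψ0 (Metric.ball_mem_nhds 0 h3)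
    rw [mem_cocompact] at hmem
    obtain ⟨S, hScomp, hSsub⟩ := hmem
    obtain ⟨R₀, hR₀⟩ := hScomp.isBounded.subset_closedBall 0
    set R := max R₀ 0 with hRdef
    have hR0 : 0 ≤ R := le_max_right _ _
    have hSR : S ⊆ Metric.closedBall 0 R :=
      hR₀.trans (Metric.closedBall_subset_closedBall (le_max_left _ _))
    have hsmall : ∀ z : Fin d → ℝ, z ∉ Metric.closedBall (0 : Fin d → ℝ) R → ‖ψ z‖ < ε/3 := by
      intro z hz
      have : z ∈ Sᶜ := fun hzS => hz (hSR hzS)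
      have := hSsub this
      simpa [mem_ball_zero_iff] using this
    have hballvol : ∀ x : Fin d → ℝ,
        volume (Metric.closedBall x R) = ENNReal.ofReal ((2*R)^d) := by
      intro x
      rw [closedBall_pi x hR0, volume_pi_pi]
      simp only [Real.volume_closedBall]
      rw [Finset.prod_const, ← ENNReal.ofReal_pow (by linarith)]
      simp
    have hPball : ∀ n : ℕ, 1 ≤ n → ∀ x : Fin d → ℝ,
        (P n (Metric.closedBall x R)).toReal ≤ (2*R)^d / (n:ℝ)^d := by
      intro n hn x
      have h1 : P n (Metric.closedBall x R) ≤ ((n : ENNReal) ^ d)⁻¹ * ENNReal.ofReal ((2*R)^d) := by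
        rw [← hballvol x]; exact hresle n _
      have hne : ((n : ENNReal) ^ d)⁻¹ * ENNReal.ofReal ((2*R)^d) ≠ ⊤ := by
        apply ENNReal.mul_ne_top _ ENNReal.ofReal_ne_top
        rw [ENNReal.inv_ne_top]
        have : (n:ENNReal) ≠ 0 := by exact_mod_cast (Nat.pos_of_ne_zero (by omega)).ne'
        positivity
      calc (P n (Metric.closedBall x R)).toReal
          ≤ (((n : ENNReal) ^ d)⁻¹ * ENNReal.ofReal ((2*R)^d)).toReal :=
            ENNReal.toReal_mono hne h1
        _ = (2*R)^d / (n:ℝ)^d := by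
            rw [ENNReal.toReal_mul, ENNReal.toReal_inv, ENNReal.toReal_pow,
              ENNReal.toReal_ofReal (by positivity)]
            simp
            ring
    have key : ∀ n : ℕ, 1 ≤ n → A n ≤ ε/3 + C * ((2*R)^d / (n:ℝ)^d) := by
      intro n hn
      haveI := hfin n
      have hintF : Integrable (Function.uncurry fun x y : Fin d → ℝ => ‖ψ (x - y)‖)
          ((P n).prod (P n)) := by
        refine ⟨(Continuous.aestronglyMeasurable ?_), HasFiniteIntegral.of_bounded
          (C := C) (Filter.Eventually.of_forall fun z => by
            show ‖‖ψ (z.1 - z.2)‖‖ ≤ C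
            rw [norm_norm]; exact hC _)⟩
        exact (hψc.comp (continuous_fst.sub continuous_snd)).norm
      have hiter : A n = ∫ x, ∫ y, ‖ψ (x - y)‖ ∂(P n) ∂(P n) := (integral_integral hintF).symm
      have hinner : ∀ x : Fin d → ℝ,
          ∫ y, ‖ψ (x - y)‖ ∂(P n) ≤ ε/3 + C * ((2*R)^d / (n:ℝ)^d) := by
        intro x
        have hind : Integrable (fun y => ε/3 + (Metric.closedBall x R).indicator (fun _ => C) y)
            (P n) :=
          (integrable_const _).add ((integrable_const C).indicator Metric.isClosed_closedBall.measurableSet)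
        have hpt : ∀ y, ‖ψ (x - y)‖ ≤ ε/3 + (Metric.closedBall x R).indicator (fun _ => C) y := by
          intro y
          by_cases hy : x - y ∈ Metric.closedBall (0 : Fin d → ℝ) R
          · have : y ∈ Metric.closedBall x R := by
              rw [Metric.mem_closedBall] at hy ⊢
              rw [dist_comm, dist_eq_norm]
              simpa using hy
            rw [Set.indicator_of_mem this]
            linarith [hC (x - y)]
          · have := hsmall _ hy
            have hyn : y ∉ Metric.closedBall x R := by
              intro hmem
              apply hy
              rw [Metric.mem_closedBall] at hmem ⊢
              rw [dist_eq_norm, sub_zero]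
              rw [dist_comm, dist_eq_norm] at hmem
              exact hmem
            rw [Set.indicator_of_notMem hyn]
            linarith
        calc ∫ y, ‖ψ (x - y)‖ ∂(P n)
            ≤ ∫ y, (ε/3 + (Metric.closedBall x R).indicator (fun _ => C) y) ∂(P n) :=
              integral_mono_of_nonneg (Filter.Eventually.of_forall fun y => norm_nonneg _)
                hind (Filter.Eventually.of_forall hpt)
          _ = ε/3 * (P n Set.univ).toReal + (P n (Metric.closedBall x R)).toReal * C := by
              rw [integral_add (integrable_const _)
                ((integrable_const C).indicator Metric.isClosed_closedBall.measurableSet),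
                integral_const, integral_indicator_const _ Metric.isClosed_closedBall.measurableSet]
              simp [mul_comm, Measure.real]
          _ ≤ ε/3 + C * ((2*R)^d / (n:ℝ)^d) := by
              rw [huniv n hn]
              simp only [ENNReal.toReal_one, mul_one]
              have := hPball n hn x
              nlinarith [ENNReal.toReal_nonneg (a := P n (Metric.closedBall x R))]
      rw [hiter]
      calc ∫ x, ∫ y, ‖ψ (x - y)‖ ∂(P n) ∂(P n)
          ≤ ∫ _x, (ε/3 + C * ((2*R)^d / (n:ℝ)^d)) ∂(P n) :=
            integral_mono_of_nonneg
              (Filter.Eventually.of_forall fun x => integral_nonneg fun y => norm_nonneg _)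
              (integrable_const _) (Filter.Eventually.of_forall hinner)
        _ = ε/3 + C * ((2*R)^d / (n:ℝ)^d) := by
            rw [integral_const, Measure.real, huniv n hn]; simp
    obtain ⟨N, hN⟩ := exists_nat_gt (3 * (C * (2*R)^d) / ε)
    filter_upwards [eventually_ge_atTop (max N 1)] with n hn
    have hn1 : 1 ≤ n := le_trans (le_max_right _ _) hn
    have hnN : (N:ℝ) ≤ n := by exact_mod_cast le_trans (le_max_left _ _) hn
    have hnpos : (0:ℝ) < n := by exact_mod_cast hn1
    have hnd : (n:ℝ) ≤ (n:ℝ)^d := le_self_pow₀ (by exact_mod_cast hn1) (by omega)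
    have hterm : C * ((2*R)^d / (n:ℝ)^d) ≤ ε/3 := by
      have hndpos : (0:ℝ) < (n:ℝ)^d := by positivity
      have h1 : 3 * (C * (2*R)^d) < (n:ℝ) * ε := by
        have := lt_of_lt_of_le hN hnN
        rw [div_lt_iff₀ hε] at this
        linarith
      rw [mul_div_assoc', div_le_iff₀ hndpos]
      nlinarith [mul_le_mul_of_nonneg_left hnd (le_of_lt h3)]
    rw [Real.norm_eq_abs, abs_of_nonneg (hAnn n)]
    linarith [key n hn1]
  -- ## integrability of the kernel on products
  have hintψ : ∀ n, Integrable (Function.uncurry fun x y : Fin d → ℝ => ψ (x - y))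
      ((P n).prod (P n)) := by
    intro n
    haveI := hfin n
    exact ⟨(hψc.comp (continuous_fst.sub continuous_snd)).aestronglyMeasurable,
      HasFiniteIntegral.of_bounded (C := C)
        (Filter.Eventually.of_forall fun z => hC (z.1 - z.2))⟩
  -- ## conjunct 1
  have conj1 : Tendsto (fun n => ∫ x, ∫ y, k x y ∂(P n) ∂(P n)) atTop (nhds 0) := by
    have heq : ∀ n, ∫ x, ∫ y, k x y ∂(P n) ∂(P n)
        = ∫ z : (Fin d → ℝ) × (Fin d → ℝ), ψ (z.1 - z.2) ∂((P n).prod (P n)) := by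
      intro n
      haveI := hfin n
      simp only [hkdef]
      exact integral_integral (hintψ n)
    rw [tendsto_zero_iff_norm_tendsto_zero]
    apply squeeze_zero (fun n => norm_nonneg _) _ hA
    intro n
    rw [heq n]
    exact norm_integral_le_integral_norm _
  -- ## reproducing identities for K
  have hkk : ∀ x y, (inner ℂ (K x) (K y) : ℂ) = k x y := by
    intro x y
    rw [hrep (K y) x, hK y]
  have hnormsq : ∀ x, (‖K x‖:ℝ)^2 = (ψ 0).re := by
    intro x
    have h1 : (inner ℂ (K x) (K x) : ℂ) = ψ 0 := by rw [hkk, hkdef, sub_self]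
    have h2 : (inner ℂ (K x) (K x) : ℂ) = (‖K x‖:ℂ)^2 := inner_self_eq_norm_sq_to_K _
    calc (‖K x‖:ℝ)^2 = ((‖K x‖:ℂ)^2).re := by
          rw [← Complex.ofReal_pow, Complex.ofReal_re]
      _ = (ψ 0).re := by rw [← h2, h1]
  have hnormK : ∀ x, ‖K x‖ ≤ Real.sqrt ((ψ 0).re) := by
    intro x
    rw [← hnormsq x, Real.sqrt_sq (norm_nonneg _)]
  have hdist : ∀ x y, (‖K x - K y‖:ℝ)^2 = (k x x - k x y - k y x + k y y).re := by
    intro x y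
    have h1 : (inner ℂ (K x - K y) (K x - K y) : ℂ) = k x x - k x y - k y x + k y y := by
      rw [inner_sub_sub_self, hkk, hkk, hkk, hkk]
    have h2 : (inner ℂ (K x - K y) (K x - K y) : ℂ) = (‖K x - K y‖:ℂ)^2 :=
      inner_self_eq_norm_sq_to_K _
    calc (‖K x - K y‖:ℝ)^2 = ((‖K x - K y‖:ℂ)^2).re := by
          rw [← Complex.ofReal_pow, Complex.ofReal_re]
      _ = _ := by rw [← h2, h1]
  have hKcont : Continuous K := by
    rw [continuous_iff_continuousAt]
    intro x₀
    rw [ContinuousAt, tendsto_iff_dist_tendsto_zero]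
    have heq : ∀ x, dist (K x) (K x₀) = Real.sqrt ((k x x - k x x₀ - k x₀ x + k x₀ x₀).re) := by
      intro x
      rw [dist_eq_norm, ← Real.sqrt_sq (norm_nonneg (K x - K x₀)), hdist]
    have hcont : Continuous fun x : Fin d → ℝ =>
        Real.sqrt ((k x x - k x x₀ - k x₀ x + k x₀ x₀).re) := by
      apply Real.continuous_sqrt.comp
      apply Complex.continuous_re.comp
      simp only [hkdef, sub_self]
      exact ((continuous_const.sub (hψc.comp (continuous_id.sub continuous_const))).sub
        (hψc.comp (continuous_const.sub continuous_id))).add continuous_const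
    have h0 : Real.sqrt ((k x₀ x₀ - k x₀ x₀ - k x₀ x₀ + k x₀ x₀).re) = 0 := by
      simp
    apply Tendsto.congr (fun x => (heq x).symm)
    rw [← h0]
    exact hcont.tendsto x₀
  have hKint : ∀ n, Integrable K (P n) := by
    intro n
    haveI := hfin n
    exact ⟨hKcont.aestronglyMeasurable,
      HasFiniteIntegral.of_bounded (C := Real.sqrt ((ψ 0).re))
        (Filter.Eventually.of_forall hnormK)⟩
  -- ## conjunct 2
  have hgA : ∀ n, ‖∫ x, K x ∂(P n)‖^2 ≤ A n := by
    intro n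
    haveI := hfin n
    set g := ∫ x, K x ∂(P n) with hg
    have e2 : ∀ y, (inner ℂ (K y) g : ℂ) = ∫ x, k y x ∂(P n) := by
      intro y
      rw [hg, ← integral_inner (hKint n) (K y)]
      exact integral_congr_ae (Filter.Eventually.of_forall fun x => hkk y x)
    have e1 : (inner ℂ g g : ℂ) = ∫ y, conj (∫ x, k y x ∂(P n)) ∂(P n) := by
      rw [← integral_inner (hKint n) g]
      refine integral_congr_ae (Filter.Eventually.of_forall fun y => ?_)
      show (inner ℂ g (K y) : ℂ) = conj (∫ x, k y x ∂(P n))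
      rw [← inner_conj_symm, e2 y]
    have e3 : (inner ℂ g g : ℂ)
        = ∫ z : (Fin d → ℝ) × (Fin d → ℝ), conj (ψ (z.1 - z.2)) ∂((P n).prod (P n)) := by
      rw [e1]
      have : ∀ y, conj (∫ x, k y x ∂(P n)) = ∫ x, conj (k y x) ∂(P n) := by
        intro y; rw [integral_conj]
      rw [integral_congr_ae (Filter.Eventually.of_forall this)]
      have hint2 : Integrable (Function.uncurry fun y x : Fin d → ℝ => conj (ψ (y - x)))
          ((P n).prod (P n)) := by
        refine ⟨?_, HasFiniteIntegral.of_bounded (C := C)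
          (Filter.Eventually.of_forall fun z => by
            show ‖conj (ψ (z.1 - z.2))‖ ≤ C
            rw [RCLike.norm_conj]; exact hC _)⟩
        apply Continuous.aestronglyMeasurable
        exact Complex.continuous_conj.comp (hψc.comp (continuous_fst.sub continuous_snd))
      simp only [hkdef]
      exact integral_integral hint2
    have e4 : ‖g‖^2 = (inner ℂ g g : ℂ).re := by
      have h2 : (inner ℂ g g : ℂ) = (‖g‖:ℂ)^2 := inner_self_eq_norm_sq_to_K _
      rw [h2, ← Complex.ofReal_pow, Complex.ofReal_re]
    rw [e4]
    calc (inner ℂ g g : ℂ).re ≤ ‖(inner ℂ g g : ℂ)‖ := Complex.re_le_norm _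
      _ ≤ ∫ z : (Fin d → ℝ) × (Fin d → ℝ), ‖conj (ψ (z.1 - z.2))‖ ∂((P n).prod (P n)) := by
          rw [e3]; exact norm_integral_le_integral_norm _
      _ = A n := by
          refine integral_congr_ae (Filter.Eventually.of_forall fun z => ?_)
          simp [RCLike.norm_conj]
  have conj2 : Tendsto (fun n => ‖∫ x, K x ∂(P n)‖) atTop (nhds 0) := by
    have hsq : Tendsto (fun n => Real.sqrt (A n)) atTop (nhds 0) := by
      have := (Real.continuous_sqrt.tendsto 0).comp hA
      simpa [Function.comp_def] using this
    apply squeeze_zero (fun n => norm_nonneg _) _ hsq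
    intro n
    have := hgA n
    calc ‖∫ x, K x ∂(P n)‖ = Real.sqrt (‖∫ x, K x ∂(P n)‖^2) :=
          (Real.sqrt_sq (norm_nonneg _)).symm
      _ ≤ Real.sqrt (A n) := Real.sqrt_le_sqrt this
  -- ## conjunct 4
  have conj4 : ¬ (∀ f : BoundedContinuousFunction (Fin d → ℝ) ℝ,
      Tendsto (fun n => ∫ x, f x ∂(P n)) atTop
        (nhds (∫ x, f x ∂(0 : Measure (Fin d → ℝ))))) := by
    intro h
    have h1 := h (BoundedContinuousFunction.const _ (1:ℝ))
    simp only [BoundedContinuousFunction.const_apply, integral_zero_measure] at h1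
    have h2 : ∀ᶠ n in atTop, (∫ _x, (1:ℝ) ∂(P n)) = 1 := by
      filter_upwards [eventually_ge_atTop 1] with n hn
      haveI := hfin n
      rw [integral_const, Measure.real, huniv n hn]
      simp
    have h3 : Tendsto (fun _ : ℕ => (1:ℝ)) atTop (nhds 0) := h1.congr' h2
    have := tendsto_nhds_unique h3 tendsto_const_nhds
    norm_num at this
  refine ⟨conj1, conj2, huniv, conj4, ?_⟩
  -- ## conjunct 5
  intro M hMfin hMprob hM0 heq
  have hmem : ∀ n, P n ∈ M := by
    intro n
    rcases Nat.eq_zero_or_pos n with h | h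
    · rw [h, hP0]; exact hM0
    · exact hMprob ⟨huniv n h⟩
  set μseq : ℕ → M := fun n => ⟨P n, hmem n⟩ with hμseq
  set pt : M := ⟨0, hM0⟩ with hpt
  -- convergence in the kernel-induced topology
  have h1 : @Tendsto ℕ M μseq atTop
      (@nhds M (TopologicalSpace.induced
        (fun μ : M => ∫ x, K x ∂(μ : Measure (Fin d → ℝ)))
        (inferInstance : TopologicalSpace H)) pt) := by
    rw [@nhds_induced]
    rw [tendsto_comap_iff]
    have : ((fun μ : M => ∫ x, K x ∂(μ : Measure (Fin d → ℝ))) ∘ μseq)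
        = fun n => ∫ x, K x ∂(P n) := rfl
    rw [this]
    have hpt0 : ∫ x, K x ∂((pt : Measure (Fin d → ℝ))) = 0 := by
      show ∫ x, K x ∂(0 : Measure (Fin d → ℝ)) = 0
      exact integral_zero_measure _
    rw [hpt0]
    exact tendsto_zero_iff_norm_tendsto_zero.mpr conj2
  rw [heq] at h1
  -- convergence in the narrow topology gives convergence of all integrals
  unfold narrowTopology at h1
  rw [@nhds_induced, tendsto_comap_iff] at h1
  apply conj4
  intro f
  have := tendsto_pi_nhds.mp h1 f
  exact this

end
end
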